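/- (Machine bound for MediumFit on agreeable instances.) Let α ∈ (0,1) and let J be a finite set of jobs that is agreeable (any two jobs in J are agreeable), in which every job is α-tight, and which is feasible on m machines. Then for every real number t, the number of jobs j ∈ J with t ∈ I_{1/2}(j) is at most 16m/α + 1. Consequently, the non-preemptive schedule that runs each job j exactly during its (1/2)-interval I_{1/2}(j) (which has length exactly p_j) uses at most 16m/α + 1 machines. -/

import Mathlib

/-- A job given by integer release date `r`, deadline `d`, and processing time `p`. -/
structure Job where
  r : ℤ
  d : ℤ
  p : ℤ
deriving DecidableEq

/-- A job is valid if `1 ≤ p` and `r + p ≤ d`. -/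
def Job.valid (j : Job) : Prop := 1 ≤ j.p ∧ j.r + j.p ≤ j.d

/-- The interval `I(j) = {t ∈ ℤ : r ≤ t < d}` of a job. -/
noncomputable def Job.interval (j : Job) : Finset ℤ := Finset.Ico j.r j.d

/-- The laxity `ℓ_j = d - r - p` of a job. -/
def Job.lax (j : Job) : ℤ := j.d - j.r - j.p

/-- The contribution `C(j, I) = max {0, |I ∩ I(j)| - ℓ_j}` of a job to a finite set `I ⊆ ℤ`. -/
noncomputable def contribution (j : Job) (I : Finset ℤ) : ℤ :=
  max 0 (((I ∩ j.interval).card : ℤ) - j.lax)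

/-- A finite set of jobs `J` is feasible on `m` machines. -/
def Feasible (J : Finset Job) (m : ℕ) : Prop :=
  ∃ σ : ℤ → Finset Job,
    (∀ t, σ t ⊆ J) ∧
    (∀ t, (σ t).card ≤ m) ∧
    (∀ t, ∀ j ∈ σ t, j.r ≤ t ∧ t < j.d) ∧
    (∀ j ∈ J, ((Finset.Ico j.r j.d).filter (fun t => j ∈ σ t)).card = j.p.toNat)

/-- A job is `α`-tight if `p_j > α (d_j - r_j)`. -/
def AlphaTight (α : ℝ) (j : Job) : Prop := α * ((j.d : ℝ) - (j.r : ℝ)) < (j.p : ℝ)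

/-- The `β`-interval `I_β(j) = [r_j + βℓ_j, d_j - βℓ_j)` of a job (a real interval). -/
def betaInterval (β : ℝ) (j : Job) : Set ℝ :=
  Set.Ico ((j.r : ℝ) + β * (j.lax : ℝ)) ((j.d : ℝ) - β * (j.lax : ℝ))

/-- Two jobs are agreeable if `(r_j - r_{j'})·(d_j - d_{j'}) ≥ 0`. -/
def Agreeable (j j' : Job) : Prop :=
  0 ≤ ((j.r : ℝ) - (j'.r : ℝ)) * ((j.d : ℝ) - (j'.d : ℝ))

/-- Two jobs are `β`-agreeable if they are agreeable and their `β`-intervals intersect. -/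
def BetaAgreeable (β : ℝ) (j j' : Job) : Prop :=
  Agreeable j j' ∧ (betaInterval β j ∩ betaInterval β j').Nonempty

lemma sum_contribution_le (J : Finset Job) (hJ : ∀ j ∈ J, j.valid) (m : ℕ)
    (hfeas : Feasible J m) (I : Finset ℤ) :
    ∑ j ∈ J, contribution j I ≤ (m : ℤ) * I.card := by
  classical
  obtain ⟨σ, hsub, hm, _, hwork⟩ := hfeas
  have hcount : ∀ j ∈ J, contribution j I ≤ ((I.filter fun s => j ∈ σ s).card : ℤ) := by
    intro j hj
    have hval := hJ j hj
    set T : Finset ℤ := (Finset.Ico j.r j.d).filter (fun s => j ∈ σ s) with hTdef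
    have hT : T.card = j.p.toNat := hwork j hj
    have h2 : T ∩ I ⊆ I.filter fun s => j ∈ σ s := by
      intro x hx
      simp only [Finset.mem_inter, hTdef, Finset.mem_filter] at hx ⊢
      exact ⟨hx.2, hx.1.2⟩
    have h3 : T \ I ⊆ j.interval \ I := by
      apply Finset.sdiff_subset_sdiff _ le_rfl
      intro x hx
      simp only [hTdef, Finset.mem_filter] at hx
      exact hx.1
    have h1 : T.card ≤ (I.filter fun s => j ∈ σ s).card + (j.interval \ I).card := by
      calc T.card = (T ∩ I).card + (T \ I).card := (Finset.card_inter_add_card_sdiff T I).symm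
        _ ≤ _ := add_le_add (Finset.card_le_card h2) (Finset.card_le_card h3)
    have h1' : ((j.p.toNat : ℕ) : ℤ) ≤ ((I.filter fun s => j ∈ σ s).card : ℤ)
        + ((j.interval \ I).card : ℤ) := by exact_mod_cast hT ▸ h1
    have hIcd' : ((j.interval ∩ I).card : ℤ) + ((j.interval \ I).card : ℤ)
        = (j.interval.card : ℤ) := by
      exact_mod_cast Finset.card_inter_add_card_sdiff j.interval I
    have hintcard : (j.interval.card : ℤ) = j.d - j.r := by
      rw [Job.interval, Int.card_Ico, Int.toNat_of_nonneg]
      have := hval.1; have := hval.2; linarith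
    have hp : ((j.p.toNat : ℕ) : ℤ) = j.p := Int.toNat_of_nonneg (by linarith [hval.1])
    rw [contribution, Finset.inter_comm, Job.lax]
    apply max_le (by positivity)
    linarith
  calc ∑ j ∈ J, contribution j I
      ≤ ∑ j ∈ J, ((I.filter fun s => j ∈ σ s).card : ℤ) := Finset.sum_le_sum hcount
    _ = ((∑ j ∈ J, (I.filter fun s => j ∈ σ s).card : ℕ) : ℤ) := by push_cast; rfl
    _ = ((∑ s ∈ I, (σ s).card : ℕ) : ℤ) := by
        congr 1
        calc ∑ j ∈ J, (I.filter fun s => j ∈ σ s).card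
            = ∑ j ∈ J, ∑ s ∈ I, (if j ∈ σ s then 1 else 0) := by
              simp only [Finset.card_filter]
          _ = ∑ s ∈ I, ∑ j ∈ J, (if j ∈ σ s then 1 else 0) := Finset.sum_comm
          _ = ∑ s ∈ I, (J.filter fun j => j ∈ σ s).card := by
              simp only [Finset.card_filter]
          _ = ∑ s ∈ I, (σ s).card := by
              refine Finset.sum_congr rfl fun s _ => ?_
              congr 1
              ext j
              simp only [Finset.mem_filter]
              exact ⟨fun h => h.2, fun h => ⟨hsub s h, h⟩⟩
    _ ≤ ((∑ _s ∈ I, m : ℕ) : ℤ) := by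
        exact_mod_cast Finset.sum_le_sum (fun s _ => hm s)
    _ = (m : ℤ) * I.card := by simp [Finset.sum_const, mul_comm]

/-- machine bound for MediumFit: on an agreeable instance of α-tight jobs
feasible on `m` machines, at any real time `t` at most `16m/α + 1` jobs satisfy
`t ∈ I_{1/2}(j)`, so MediumFit uses at most `16m/α + 1` machines. -/
theorem mediumfit_machine_bound
    (α : ℝ) (hα : α ∈ Set.Ioo (0 : ℝ) 1)
    (J : Finset Job) (hJ : ∀ j ∈ J, j.valid)
    (hagree : ∀ j ∈ J, ∀ j' ∈ J, Agreeable j j')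
    (htight : ∀ j ∈ J, AlphaTight α j)
    (m : ℕ) (hfeas : Feasible J m) (t : ℝ) :
    ({j : Job | j ∈ J ∧ t ∈ betaInterval (1 / 2) j}.ncard : ℝ) ≤ 16 * (m : ℝ) / α + 1 := by
  classical
  obtain ⟨hαpos, hα1⟩ := hα
  set S : Finset Job := J.filter (fun j => t ∈ betaInterval (1 / 2) j) with hSdef
  have hset : {j : Job | j ∈ J ∧ t ∈ betaInterval (1 / 2) j} = ↑S := by
    ext j; simp [hSdef]
  rw [hset, Set.ncard_coe_finset]
  have hm0 : (0 : ℝ) ≤ (m : ℝ) := Nat.cast_nonneg m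
  rcases S.eq_empty_or_nonempty with hS | hS
  · rw [hS]; simp; positivity
  obtain ⟨j₀, hj₀S, hmin⟩ := S.exists_min_image (fun j => j.d - j.r) hS
  have hj₀J : j₀ ∈ J := (Finset.mem_filter.mp hj₀S).1
  have hj₀t : t ∈ betaInterval (1 / 2) j₀ := (Finset.mem_filter.mp hj₀S).2
  set L : ℤ := j₀.d - j₀.r with hLdef
  have hLp : j₀.p ≤ L := by have := (hJ j₀ hj₀J).2; omega
  have hL1 : 1 ≤ L := le_trans (hJ j₀ hj₀J).1 hLp
  -- basic facts for jobs in S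
  have hfacts : ∀ j ∈ S, 0 ≤ j.lax ∧ (j.r : ℝ) + (1/2) * j.lax ≤ t ∧
      t < (j.d : ℝ) - (1/2) * j.lax := by
    intro j hjS
    obtain ⟨hjJ, hjt⟩ := Finset.mem_filter.mp hjS
    obtain ⟨h1, h2⟩ := hjt
    have := (hJ j hjJ).1; have := (hJ j hjJ).2
    exact ⟨by rw [Job.lax]; omega, h1, h2⟩
  have hlax0 : (0:ℝ) ≤ (j₀.lax : ℝ) := by exact_mod_cast (hfacts j₀ hj₀S).1
  have ht0r : (j₀.r : ℝ) ≤ t := by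
    have := (hfacts j₀ hj₀S).2.1; linarith
  have ht0d : t < (j₀.d : ℝ) := by
    have := (hfacts j₀ hj₀S).2.2; linarith
  -- laxity bound
  have hlax : ∀ j ∈ S, j.lax ≤ 2 * L - 1 := by
    intro j hjS
    obtain ⟨hjJ, _⟩ := Finset.mem_filter.mp hjS
    obtain ⟨hjl0, hj1, hj2⟩ := hfacts j hjS
    have hag := hagree j hjJ j₀ hj₀J
    have hR : ((j.lax : ℝ)) < 2 * (L : ℝ) := by
      rcases mul_nonneg_iff.mp hag with ⟨h1, h2⟩ | ⟨h1, h2⟩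
      · -- j₀.r ≤ j.r
        have : (j₀.r : ℝ) ≤ (j.r : ℝ) := by linarith
        push_cast [hLdef]
        linarith
      · -- j.d ≤ j₀.d
        have : (j.d : ℝ) ≤ (j₀.d : ℝ) := by linarith
        push_cast [hLdef]
        linarith
    have h2L : (j.lax : ℝ) < ((2 * L : ℤ) : ℝ) := by push_cast; linarith
    have : j.lax < 2 * L := by exact_mod_cast h2L
    omega
  -- the witness interval
  set u : ℤ := ⌊t⌋ - 4 * L with hudef
  set v : ℤ := ⌊t⌋ + 4 * L + 1 with hvdef
  set I : Finset ℤ := Finset.Ico u v with hIdef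
  have hIcard : (I.card : ℤ) = 8 * L + 1 := by
    rw [hIdef, Int.card_Ico, Int.toNat_of_nonneg (by omega)]
    omega
  -- per-job contribution bound
  have hkey : ∀ j ∈ S, α * (L : ℝ) ≤ (contribution j I : ℝ) := by
    intro j hjS
    obtain ⟨hjJ, _⟩ := Finset.mem_filter.mp hjS
    obtain ⟨hjl0, hj1, hj2⟩ := hfacts j hjS
    have hjlax := hlax j hjS
    have hlen : L ≤ j.d - j.r := hmin j hjS
    have hjl0R : (0:ℝ) ≤ (j.lax : ℝ) := by exact_mod_cast hjl0
    have hrfloor : j.r ≤ ⌊t⌋ := Int.le_floor.mpr (by push_cast; linarith)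
    have hfloord : ⌊t⌋ < j.d := Int.floor_lt.mpr (by push_cast; linarith)
    have hint : min j.p (2 * L + 2) ≤ contribution j I := by
      have hcard : (min v j.d - max u j.r) ≤ ((I ∩ j.interval).card : ℤ) := by
        rw [hIdef, Job.interval, Finset.Ico_inter_Ico, Int.card_Ico]
        exact Int.self_le_toNat _
      have hcontr : ((I ∩ j.interval).card : ℤ) - j.lax ≤ contribution j I :=
        le_max_right _ _
      rcases le_or_gt u j.r with h1 | h1
      · rcases le_or_gt j.d v with h2 | h2
        · have : min v j.d = j.d := min_eq_right h2
          have : (min v j.d - max u j.r) = j.d - j.r := by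
            rw [min_eq_right h2, max_eq_right h1]
          have hple : j.p ≤ contribution j I := by
            rw [Job.lax] at *
            omega
          exact le_trans (min_le_left _ _) hple
        · -- v < j.d
          have hmaxle : max u j.r ≤ ⌊t⌋ := max_le (by omega) hrfloor
          have : min v j.d = v := min_eq_left (le_of_lt h2)
          have h4 : 2 * L + 2 ≤ contribution j I := by omega
          exact le_trans (min_le_right _ _) h4
      · -- j.r < u
        have hminge : ⌊t⌋ + 1 ≤ min v j.d := le_min (by omega) (by omega)
        have : max u j.r = u := max_eq_left (le_of_lt h1)
        have h4 : 2 * L + 2 ≤ contribution j I := by omega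
        exact le_trans (min_le_right _ _) h4
    have htj := htight j hjJ
    have hαL1 : α * (L : ℝ) ≤ (j.p : ℝ) := by
      have hlenR : (L : ℝ) ≤ (j.d : ℝ) - (j.r : ℝ) := by exact_mod_cast hlen
      rw [AlphaTight] at htj
      nlinarith
    have hαL2 : α * (L : ℝ) ≤ ((2 * L + 2 : ℤ) : ℝ) := by
      push_cast
      have hLR : (1 : ℝ) ≤ (L : ℝ) := by exact_mod_cast hL1
      nlinarith
    have : α * (L : ℝ) ≤ ((min j.p (2 * L + 2) : ℤ) : ℝ) := by
      rcases min_cases j.p (2 * L + 2) with ⟨h, _⟩ | ⟨h, _⟩ <;> rw [h]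
      · exact hαL1
      · exact hαL2
    exact le_trans this (by exact_mod_cast hint)
  -- summation
  have hsum1 : (S.card : ℝ) * (α * (L : ℝ)) ≤ ∑ j ∈ S, (contribution j I : ℝ) := by
    have := Finset.card_nsmul_le_sum S (fun j => (contribution j I : ℝ)) (α * (L : ℝ)) hkey
    simpa [nsmul_eq_mul] using this
  have hsum2 : ∑ j ∈ S, (contribution j I : ℝ) ≤ ∑ j ∈ J, (contribution j I : ℝ) := by
    apply Finset.sum_le_sum_of_subset_of_nonneg (Finset.filter_subset _ _)
    intro j _ _
    have : (0:ℤ) ≤ contribution j I := le_max_left _ _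
    exact_mod_cast this
  have hsum3 : ∑ j ∈ J, (contribution j I : ℝ) ≤ (m : ℝ) * (8 * (L:ℝ) + 1) := by
    have := sum_contribution_le J hJ m hfeas I
    rw [hIcard] at this
    calc ∑ j ∈ J, (contribution j I : ℝ) = ((∑ j ∈ J, contribution j I : ℤ) : ℝ) := by
          push_cast; rfl
      _ ≤ (((m : ℤ) * (8 * L + 1) : ℤ) : ℝ) := by exact_mod_cast this
      _ = (m : ℝ) * (8 * (L:ℝ) + 1) := by push_cast; ring
  have hLR : (1 : ℝ) ≤ (L : ℝ) := by exact_mod_cast hL1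
  have hn : (S.card : ℝ) * (α * (L:ℝ)) ≤ (m : ℝ) * (8 * (L:ℝ) + 1) := by linarith
  have hL0 : (0:ℝ) < (L:ℝ) := by linarith
  have h2 : (S.card : ℝ) * α * (L:ℝ) ≤ 9 * m * (L:ℝ) := by nlinarith
  have h3 : (S.card : ℝ) * α ≤ 9 * m := le_of_mul_le_mul_right h2 hL0
  have h4 : (S.card : ℝ) ≤ 9 * m / α := by rw [le_div_iff₀ hαpos]; exact h3
  have h5 : 9 * (m:ℝ) / α ≤ 16 * m / α := by gcongr <;> linarith
  linarith
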